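/- In F2[t_1, ..., t_8] with the Steenrod algebra action, the cohit space QP_4^{⊗8} (degree-4 homogeneous polynomials modulo hit elements) has dimension 238 over F2. -/

import Mathlib

open MvPolynomial

/-- The total Steenrod square on `F2[t_1,…,t_h]`: the algebra endomorphism `t_j ↦ t_j + t_j^2`.
Its degree-`(m+k)` homogeneous component on a degree-`m` homogeneous polynomial is `Sq^k`,
which on monomials agrees with the Cartan formula and `Sq^k(t_j^m) = C(m,k) t_j^{m+k}` mod 2. -/
noncomputable def sqT (h : ℕ) :
    MvPolynomial (Fin h) (ZMod 2) →ₐ[ZMod 2] MvPolynomial (Fin h) (ZMod 2) :=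
  aeval (fun j => X j + X j ^ 2)

/-- The hit subspace in degree `n`: the span of all `Sq^k f` with `1 ≤ k ≤ n` and
`f` homogeneous of degree `n − k` (i.e. the degree-`n` component of the total square of `f`). -/
noncomputable def hitSub (h n : ℕ) : Submodule (ZMod 2) (MvPolynomial (Fin h) (ZMod 2)) :=
  Submodule.span (ZMod 2)
    {g | ∃ k f, 1 ≤ k ∧ k ≤ n ∧ MvPolynomial.IsHomogeneous f (n - k) ∧
      g = MvPolynomial.homogeneousComponent n (sqT h f)}

/-- The cohit space `QP_n^{⊗h}`: degree-`n` homogeneous polynomials modulo hit elements. -/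
abbrev QP (h n : ℕ) :=
  ↥(homogeneousSubmodule (Fin h) (ZMod 2) n) ⧸
    ((hitSub h n).comap (homogeneousSubmodule (Fin h) (ZMod 2) n).subtype)

set_option maxHeartbeats 2000000
set_option synthInstance.maxHeartbeats 400000
noncomputable section
namespace QPaux
abbrev P8 := MvPolynomial (Fin 8) (ZMod 2)

lemma two_eq_zero : (2 : P8) = 0 := by
  have := CharP.cast_eq_zero P8 2
  simpa using this

def L : P8 →ₗ[ZMod 2] P8 := (homogeneousComponent 4) ∘ₗ (sqT 8).toLinearMap

lemma hc_hom {m n : ℕ} {p : P8} (h : p.IsHomogeneous m) :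
    homogeneousComponent n p = if m = n then p else 0 := by
  rw [homogeneousComponent_of_mem h]
  by_cases h' : m = n <;> simp [h', eq_comm]

lemma shapeB (a b : Fin 8) : L (X a * X b) = X a ^ 2 * X b ^ 2 := by
  have e : sqT 8 (X a * X b) = (X a * X b) + (X a ^2 * X b + X a * X b^2) + X a^2*X b^2 := by
    simp [sqT]
    ring
  have h2 : ((X a ^2 * X b + X a * X b^2 : P8)).IsHomogeneous 3 :=
    IsHomogeneous.add ((isHomogeneous_X_pow _ _).mul (isHomogeneous_X _ _))
      ((isHomogeneous_X _ _).mul (isHomogeneous_X_pow _ _))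
  have h1 : ((X a * X b : P8)).IsHomogeneous 2 := (isHomogeneous_X _ _).mul (isHomogeneous_X _ _)
  have h3 : ((X a^2*X b^2 : P8)).IsHomogeneous 4 := (isHomogeneous_X_pow _ _).mul (isHomogeneous_X_pow _ _)
  simp only [L, LinearMap.comp_apply, AlgHom.toLinearMap_apply, e, map_add,
    hc_hom h1, hc_hom h2, hc_hom h3]
  norm_num

lemma sqT_X (i : Fin 8) : sqT 8 (X i) = X i + X i ^ 2 := by simp [sqT]

def S3 (a b c : Fin 8) : P8 := X a^2*X b^1*X c^1 + X a^1*X b^2*X c^1 + X a^1*X b^1*X c^2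

lemma homXXX (i j k : Fin 8) (p q r : ℕ) :
    (X i^p * X j^q * X k^r : P8).IsHomogeneous (p+q+r) :=
  ((isHomogeneous_X_pow _ _).mul (isHomogeneous_X_pow _ _)).mul (isHomogeneous_X_pow _ _)

lemma homXX (i j : Fin 8) (p q : ℕ) :
    (X i^p * X j^q : P8).IsHomogeneous (p+q) :=
  (isHomogeneous_X_pow _ _).mul (isHomogeneous_X_pow _ _)

lemma shapeA (a b c : Fin 8) : L (X a * X b * X c) = S3 a b c := by
  have e : sqT 8 (X a * X b * X c) =
      (X a^1 * X b^1 * X c^1) + S3 a b c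
      + (X a^2*X b^2*X c^1 + X a^2*X b^1*X c^2 + X a^1*X b^2*X c^2) + X a^2*X b^2*X c^2 := by
    unfold S3
    rw [map_mul, map_mul, sqT_X, sqT_X, sqT_X]
    ring
  have h3 : ((X a^1 * X b^1 * X c^1 : P8)).IsHomogeneous 3 := homXXX a b c 1 1 1
  have h4 : (S3 a b c).IsHomogeneous 4 :=
    ((homXXX a b c 2 1 1).add (homXXX a b c 1 2 1)).add (homXXX a b c 1 1 2)
  have h5 : ((X a^2*X b^2*X c^1 + X a^2*X b^1*X c^2 + X a^1*X b^2*X c^2 : P8)).IsHomogeneous 5 :=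
    ((homXXX a b c 2 2 1).add (homXXX a b c 2 1 2)).add (homXXX a b c 1 2 2)
  have h6 : ((X a^2*X b^2*X c^2 : P8)).IsHomogeneous 6 := homXXX a b c 2 2 2
  simp only [L, LinearMap.comp_apply, AlgHom.toLinearMap_apply, e, map_add,
    hc_hom h3, hc_hom h4, hc_hom h5, hc_hom h6]
  norm_num

lemma shapeC (a : Fin 8) : L (X a) = 0 := by
  have e : sqT 8 (X a) = X a + X a^2 := by simp [sqT]
  have h1 : ((X a : P8)).IsHomogeneous 1 := isHomogeneous_X _ _
  have h2 : ((X a^2 : P8)).IsHomogeneous 2 := isHomogeneous_X_pow _ _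
  simp only [L, LinearMap.comp_apply, AlgHom.toLinearMap_apply, e, map_add,
    hc_hom h1, hc_hom h2]
  norm_num

lemma shapeD (r : ZMod 2) : L (C r) = 0 := by
  have e : sqT 8 (C r) = C r := by simp [sqT]
  simp only [L, LinearMap.comp_apply, AlgHom.toLinearMap_apply, e,
    hc_hom (isHomogeneous_C _ r)]
  norm_num

def e4 (a : Fin 8) : Fin 8 →₀ ℕ := Finsupp.single a 4
def e22 (a b : Fin 8) : Fin 8 →₀ ℕ := Finsupp.single a 2 + Finsupp.single b 2
def e211 (a b c : Fin 8) : Fin 8 →₀ ℕ :=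
  Finsupp.single a 2 + Finsupp.single b 1 + Finsupp.single c 1

lemma mX4 (a : Fin 8) : (X a ^ 4 : P8) = monomial (e4 a) 1 := X_pow_eq_monomial

lemma mXX (a b : Fin 8) : (X a ^ 2 * X b ^ 2 : P8) = monomial (e22 a b) 1 := by
  rw [X_pow_eq_monomial, X_pow_eq_monomial, monomial_mul, mul_one]; rfl

lemma mXXX (a b c : Fin 8) : (X a ^ 2 * X b ^ 1 * X c ^ 1 : P8) = monomial (e211 a b c) 1 := by
  rw [X_pow_eq_monomial, X_pow_eq_monomial, X_pow_eq_monomial, monomial_mul, monomial_mul,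
    mul_one, mul_one]; rfl

lemma e4_apply (a t : Fin 8) : e4 a t = if a = t then 4 else 0 := Finsupp.single_apply

lemma e22_apply (a b t : Fin 8) :
    e22 a b t = (if a = t then 2 else 0) + (if b = t then 2 else 0) := by
  simp [e22, Finsupp.single_apply]

lemma e211_apply (a b c t : Fin 8) :
    e211 a b c t = (if a = t then 2 else 0) + (if b = t then 1 else 0) + (if c = t then 1 else 0) := by
  simp [e211, Finsupp.single_apply]

lemma N1 {a b x : Fin 8} (hab : a ≠ b) : e22 a b ≠ e4 x := by
  intro h
  have h1 := DFunLike.congr_fun h a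
  rw [e22_apply, e4_apply, if_pos rfl, if_neg (fun hh => hab hh.symm)] at h1
  split_ifs at h1 <;> omega

lemma N2 {a b c x : Fin 8} (hab : a ≠ b) (hcb : c ≠ b) : e211 a b c ≠ e4 x := by
  intro h
  have h1 := DFunLike.congr_fun h b
  rw [e211_apply, e4_apply, if_neg hab, if_pos rfl, if_neg hcb] at h1
  split_ifs at h1 <;> omega

lemma N3 {a b c x y : Fin 8} (hab : a ≠ b) (hcb : c ≠ b) : e211 a b c ≠ e22 x y := by
  intro h
  have h1 := DFunLike.congr_fun h b
  rw [e211_apply, e22_apply, if_neg hab, if_pos rfl, if_neg hcb] at h1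
  split_ifs at h1 <;> omega

lemma iteval {a x : Fin 8} (p : ℕ) :
    (if a = x then p else 0) = if a.val = x.val then p else 0 := by
  simp [Fin.ext_iff]

lemma E2 {a b x y : Fin 8} (hab : a < b) (hxy : x < y) :
    e22 a b = e22 x y ↔ a = x ∧ b = y := by
  rw [Fin.lt_def] at hab hxy
  constructor
  · intro h
    have Ha := DFunLike.congr_fun h a
    have Hb := DFunLike.congr_fun h b
    have Hx := DFunLike.congr_fun h x
    simp only [e22_apply, iteval] at Ha Hb Hx
    simp only [Fin.ext_iff]
    split_ifs at Ha Hb Hx <;> omega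
  · rintro ⟨rfl, rfl⟩; rfl

lemma E3 {a b c x y z : Fin 8} (hab : a < b) (hbc : b < c) (hxy : x < y) (hyz : y < z) :
    e211 a b c = e211 x y z ↔ a = x ∧ b = y ∧ c = z := by
  rw [Fin.lt_def] at hab hbc hxy hyz
  constructor
  · intro h
    have hax : a = x := by
      have Ha := DFunLike.congr_fun h a
      simp only [e211_apply, iteval] at Ha
      simp only [Fin.ext_iff]
      split_ifs at Ha <;> omega
    subst hax
    have hby : b = y := by
      have Hb := DFunLike.congr_fun h b
      have Hy := DFunLike.congr_fun h y
      simp only [e211_apply, iteval] at Hb Hy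
      simp only [Fin.ext_iff]
      split_ifs at Hb Hy <;> omega
    subst hby
    have hcz : c = z := by
      have Hc := DFunLike.congr_fun h c
      simp only [e211_apply, iteval] at Hc
      simp only [Fin.ext_iff]
      split_ifs at Hc <;> omega
    exact ⟨rfl, rfl, hcz⟩
  · rintro ⟨rfl, rfl, rfl⟩; rfl

lemma N4 {u v w x y z : Fin 8} (hvu : v < u) (huw : u ≠ w) (hvw : v ≠ w)
    (hxy : x < y) (hxz : x < z) (hyz : y ≠ z) :
    e211 u v w ≠ e211 x y z := by
  rw [Fin.lt_def] at hvu hxy hxz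
  rw [Ne, Fin.ext_iff] at huw hvw hyz
  intro h
  have Hx := DFunLike.congr_fun h x
  have Hv := DFunLike.congr_fun h v
  simp only [e211_apply, iteval] at Hx Hv
  split_ifs at Hx Hv <;> omega

lemma mS3 (a b c : Fin 8) : S3 a b c =
    monomial (e211 a b c) 1 + monomial (e211 b a c) 1 + monomial (e211 c a b) 1 := by
  rw [← mXXX a b c, ← mXXX b a c, ← mXXX c a b]
  unfold S3; ring

abbrev I2 := {p : Fin 8 × Fin 8 // p.1 < p.2}
abbrev I3 := {t : Fin 8 × Fin 8 × Fin 8 // t.1 < t.2.1 ∧ t.2.1 < t.2.2}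
abbrev Idx := Fin 8 ⊕ I2 ⊕ I3

def u : Idx → P8 :=
  Sum.elim (fun a => X a ^ 4)
    (Sum.elim (fun p => X p.1.1 ^ 2 * X p.1.2 ^ 2)
      (fun t => S3 t.1.1 t.1.2.1 t.1.2.2))

def piv : Idx → (Fin 8 →₀ ℕ) :=
  Sum.elim (fun a => e4 a)
    (Sum.elim (fun p => e22 p.1.1 p.1.2)
      (fun t => e211 t.1.1 t.1.2.1 t.1.2.2))

lemma delta (i j : Idx) : coeff (piv j) (u i) = if i = j then 1 else 0 := by
  rcases i with a | ⟨⟨a,b⟩,hab⟩ | ⟨⟨a,b,c⟩,hab,hbc⟩ <;>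
    rcases j with x | ⟨⟨x,y⟩,hxy⟩ | ⟨⟨x,y,z⟩,hxy,hyz⟩ <;>
      simp only [u, piv, Sum.elim_inl, Sum.elim_inr, mX4, mXX, mS3, coeff_add, coeff_monomial]
  · simp only [Sum.inl.injEq, e4]
    exact if_congr (Finsupp.single_left_inj (by norm_num : (4:ℕ) ≠ 0)) rfl rfl
  · rw [if_neg (fun h => N1 (ne_of_lt hxy) h.symm), if_neg (by simp)]
  · rw [if_neg (fun h => N2 hxy.ne hyz.ne' h.symm), if_neg (by simp)]
  · rw [if_neg (N1 hab.ne), if_neg (by simp)]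
  · rw [if_congr (E2 hab hxy) rfl rfl]
    simp [Sum.inr.injEq, Sum.inl.injEq, Subtype.mk.injEq, Prod.mk.injEq, Subtype.ext_iff]
  · rw [if_neg (fun h => N3 hxy.ne hyz.ne' h.symm), if_neg (by simp)]
  · rw [if_neg (N2 hab.ne hbc.ne'), if_neg (N2 hab.ne' (lt_trans hab hbc).ne'),
      if_neg (N2 (lt_trans hab hbc).ne' hab.ne'), if_neg (by simp)]
    norm_num
  · rw [if_neg (N3 hab.ne hbc.ne'), if_neg (N3 hab.ne' (lt_trans hab hbc).ne'),
      if_neg (N3 (lt_trans hab hbc).ne' hab.ne'), if_neg (by simp)]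
    norm_num
  · rw [if_neg (N4 hab hbc.ne (lt_trans hab hbc).ne hxy (lt_trans hxy hyz) hyz.ne),
      if_neg (N4 (lt_trans hab hbc) hbc.ne' hab.ne hxy (lt_trans hxy hyz) hyz.ne),
      if_congr (E3 hab hbc hxy hyz) rfl rfl]
    rw [add_zero, add_zero]
    simp [Subtype.ext_iff, Prod.ext_iff, and_assoc]

lemma li_u : LinearIndependent (ZMod 2) u := by
  rw [linearIndependent_iff']
  intro s g hsum i hi
  have H := congrArg (coeff (piv i)) hsum
  rw [coeff_sum, coeff_zero] at H
  have H2 : ∀ j ∈ s, coeff (piv i) (g j • u j) = if j = i then g j else 0 := by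
    intro j _
    rw [coeff_smul, delta j i]
    split_ifs <;> simp
  rw [Finset.sum_congr rfl H2, Finset.sum_ite_eq' s i g] at H
  rw [if_pos hi] at H
  exact H

def SpanU : Submodule (ZMod 2) P8 := Submodule.span (ZMod 2) (Set.range u)

lemma mem4 (a : Fin 8) : (X a ^ 4 : P8) ∈ SpanU :=
  Submodule.subset_span ⟨Sum.inl a, rfl⟩

lemma mem22 (a b : Fin 8) : (X a ^ 2 * X b ^ 2 : P8) ∈ SpanU := by
  rcases lt_trichotomy a b with h | h | h
  · exact Submodule.subset_span ⟨Sum.inr (Sum.inl ⟨(a, b), h⟩), rfl⟩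
  · subst h
    rw [show (X a ^ 2 * X a ^ 2 : P8) = X a ^ 4 by ring]
    exact mem4 a
  · rw [show (X a ^ 2 * X b ^ 2 : P8) = X b ^ 2 * X a ^ 2 by ring]
    exact Submodule.subset_span ⟨Sum.inr (Sum.inl ⟨(b, a), h⟩), rfl⟩

lemma memS3sorted {a b c : Fin 8} (hab : a < b) (hbc : b < c) : S3 a b c ∈ SpanU :=
  Submodule.subset_span ⟨Sum.inr (Sum.inr ⟨(a, b, c), hab, hbc⟩), rfl⟩

lemma mem211 (a b c : Fin 8) : S3 a b c ∈ SpanU := by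
  by_cases hab : a = b
  · subst hab
    rw [show S3 a a c = X a ^ 2 * X c ^ 2 by
      unfold S3; linear_combination (X a ^ 3 * X c : P8) * two_eq_zero]
    exact mem22 a c
  by_cases hac : a = c
  · subst hac
    rw [show S3 a b a = X a ^ 2 * X b ^ 2 by
      unfold S3; linear_combination (X a ^ 3 * X b : P8) * two_eq_zero]
    exact mem22 a b
  by_cases hbc : b = c
  · subst hbc
    rw [show S3 a b b = X a ^ 2 * X b ^ 2 by
      unfold S3; linear_combination (X a * X b ^ 3 : P8) * two_eq_zero]
    exact mem22 a b
  have key : ∀ p q r : Fin 8, p < q → q < r → S3 a b c = S3 p q r → S3 a b c ∈ SpanU :=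
    fun p q r h1 h2 h3 => h3 ▸ memS3sorted h1 h2
  rcases Ne.lt_or_gt hab with h1 | h1
  · rcases Ne.lt_or_gt hbc with h2 | h2
    · exact key a b c h1 h2 rfl
    · rcases Ne.lt_or_gt hac with h3 | h3
      · exact key a c b h3 h2 (by unfold S3; ring)
      · exact key c a b h3 h1 (by unfold S3; ring)
  · rcases Ne.lt_or_gt hac with h3 | h3
    · exact key b a c h1 h3 (by unfold S3; ring)
    · rcases Ne.lt_or_gt hbc with h2 | h2
      · exact key b c a h2 h3 (by unfold S3; ring)
      · exact key c b a h2 h1 (by unfold S3; ring)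

lemma span_le_hit : SpanU ≤ hitSub 8 4 := by
  rw [SpanU, Submodule.span_le]
  rintro g ⟨i, rfl⟩
  rcases i with a | ⟨⟨a,b⟩,hab⟩ | ⟨⟨a,b,c⟩,hab,hbc⟩
  · apply Submodule.subset_span
    refine ⟨2, X a * X a, by norm_num, by norm_num, ?_, ?_⟩
    · show (X a * X a : P8).IsHomogeneous 2
      exact (isHomogeneous_X _ _).mul (isHomogeneous_X _ _)
    · show (u (Sum.inl a) : P8) = _
      have : homogeneousComponent 4 (sqT 8 (X a * X a)) = L (X a * X a) := rfl
      rw [this, shapeB a a, u, Sum.elim_inl]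
      ring
  · apply Submodule.subset_span
    refine ⟨2, X a * X b, by norm_num, by norm_num, ?_, ?_⟩
    · show (X a * X b : P8).IsHomogeneous 2
      exact (isHomogeneous_X _ _).mul (isHomogeneous_X _ _)
    · show (u (Sum.inr (Sum.inl ⟨(a,b),hab⟩)) : P8) = _
      have : homogeneousComponent 4 (sqT 8 (X a * X b)) = L (X a * X b) := rfl
      rw [this, shapeB a b, u, Sum.elim_inr, Sum.elim_inl]
  · apply Submodule.subset_span
    refine ⟨1, X a * X b * X c, by norm_num, by norm_num, ?_, ?_⟩
    · show (X a * X b * X c : P8).IsHomogeneous 3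
      exact ((isHomogeneous_X _ _).mul (isHomogeneous_X _ _)).mul (isHomogeneous_X _ _)
    · show (u (Sum.inr (Sum.inr ⟨(a,b,c),hab,hbc⟩)) : P8) = _
      have : homogeneousComponent 4 (sqT 8 (X a * X b * X c)) = L (X a * X b * X c) := rfl
      rw [this, shapeA a b c, u, Sum.elim_inr, Sum.elim_inr]

lemma card_toMultiset_deg (d : Fin 8 →₀ ℕ) :
    Multiset.card (Finsupp.toMultiset d) = Finsupp.degree d := by
  rw [Finsupp.card_toMultiset]; rfl

lemma toFinsupp_single (x : Fin 8) : Multiset.toFinsupp ({x} : Multiset (Fin 8)) =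
    Finsupp.single x 1 := Multiset.toFinsupp_singleton x

lemma mono_decomp3 {d : Fin 8 →₀ ℕ} (hd : Finsupp.degree d = 3) :
    ∃ x y z : Fin 8, monomial d (1 : ZMod 2) = X x * X y * X z := by
  have hc : Multiset.card d.toMultiset = 3 := by rw [card_toMultiset_deg, hd]
  rcases Multiset.card_eq_three.mp hc with ⟨x, y, z, hxyz⟩
  refine ⟨x, y, z, ?_⟩
  have hd2 : d = Finsupp.single x 1 + (Finsupp.single y 1 + Finsupp.single z 1) := by
    have h1 := congrArg Multiset.toFinsupp hxyz
    rw [Finsupp.toMultiset_toFinsupp] at h1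
    rw [h1, show ({x, y, z} : Multiset (Fin 8)) = {x} + ({y} + {z}) from rfl,
      map_add, map_add, toFinsupp_single, toFinsupp_single, toFinsupp_single]
  rw [hd2, monomial_single_add, monomial_single_add]
  rw [show monomial (Finsupp.single z 1) (1 : ZMod 2) = X z from rfl]
  ring

lemma mono_decomp2 {d : Fin 8 →₀ ℕ} (hd : Finsupp.degree d = 2) :
    ∃ x y : Fin 8, monomial d (1 : ZMod 2) = X x * X y := by
  have hc : Multiset.card d.toMultiset = 2 := by rw [card_toMultiset_deg, hd]
  rcases Multiset.card_eq_two.mp hc with ⟨x, y, hxy⟩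
  refine ⟨x, y, ?_⟩
  have hd2 : d = Finsupp.single x 1 + Finsupp.single y 1 := by
    have h1 := congrArg Multiset.toFinsupp hxy
    rw [Finsupp.toMultiset_toFinsupp] at h1
    rw [h1, show ({x, y} : Multiset (Fin 8)) = {x} + {y} from rfl,
      map_add, toFinsupp_single, toFinsupp_single]
  rw [hd2, monomial_single_add]
  rw [show monomial (Finsupp.single y 1) (1 : ZMod 2) = X y from rfl]
  ring

lemma mono_decomp1 {d : Fin 8 →₀ ℕ} (hd : Finsupp.degree d = 1) :
    ∃ x : Fin 8, monomial d (1 : ZMod 2) = X x := by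
  have hc : Multiset.card d.toMultiset = 1 := by rw [card_toMultiset_deg, hd]
  rcases Multiset.card_eq_one.mp hc with ⟨x, hx⟩
  refine ⟨x, ?_⟩
  have h1 := congrArg Multiset.toFinsupp hx
  rw [Finsupp.toMultiset_toFinsupp, toFinsupp_single] at h1
  rw [h1]
  rfl

lemma L_monomial_mem {k : ℕ} (hk1 : 1 ≤ k) (hk4 : k ≤ 4) {d : Fin 8 →₀ ℕ}
    (hd : Finsupp.degree d = 4 - k) : L (monomial d 1) ∈ SpanU := by
  interval_cases k
  · rcases mono_decomp3 hd with ⟨x, y, z, hm⟩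
    rw [hm, shapeA]
    exact mem211 x y z
  · rcases mono_decomp2 hd with ⟨x, y, hm⟩
    rw [hm, shapeB]
    exact mem22 x y
  · rcases mono_decomp1 hd with ⟨x, hm⟩
    rw [hm, shapeC]
    exact Submodule.zero_mem _
  · have : d = 0 := (Finsupp.degree_eq_zero_iff d).mp hd
    rw [this, show monomial (0 : Fin 8 →₀ ℕ) (1 : ZMod 2) = C 1 from rfl, shapeD]
    exact Submodule.zero_mem _

lemma hit_le_span : hitSub 8 4 ≤ SpanU := by
  rw [hitSub, Submodule.span_le]
  rintro g ⟨k, f, hk1, hk4, hf, rfl⟩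
  show L f ∈ SpanU
  have hmem : f ∈ AddMonoidAlgebra.supported (ZMod 2) (ZMod 2) {d : Fin 8 →₀ ℕ | Finsupp.degree d = 4 - k} := by
    rw [← homogeneousSubmodule_eq_finsupp_supported]
    exact (mem_homogeneousSubmodule _ _).mpr hf
  rw [AddMonoidAlgebra.supported_eq_span_single] at hmem
  refine Submodule.span_induction ?_ ?_ ?_ ?_ hmem
  · rintro p ⟨d, hd, rfl⟩
    have : ((fun i => AddMonoidAlgebra.single i 1) d : P8) = monomial d 1 := single_eq_monomial d 1
    rw [this]
    exact L_monomial_mem hk1 hk4 hd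
  · rw [map_zero]; exact Submodule.zero_mem _
  · intro p q _ _ hp hq
    rw [map_add]; exact Submodule.add_mem _ hp hq
  · intro r p _ hp
    rw [map_smul]; exact Submodule.smul_mem _ _ hp

lemma hit_eq : hitSub 8 4 = SpanU := le_antisymm hit_le_span span_le_hit

lemma cardI2 : Fintype.card I2 = 28 := by decide
lemma cardI3 : Fintype.card I3 = 56 := by decide

lemma cardIdx : Fintype.card Idx = 92 := by
  rw [show (92:ℕ) = 8 + (28 + 56) from rfl]
  rw [Fintype.card_sum, Fintype.card_sum, cardI2, cardI3, Fintype.card_fin]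

lemma finrank_hit : Module.finrank (ZMod 2) (hitSub 8 4) = 92 := by
  rw [hit_eq, SpanU, finrank_span_eq_card li_u, cardIdx]

def degEquiv : {d : Fin 8 →₀ ℕ // Finsupp.degree d = 4} ≃ Sym (Fin 8) 4 where
  toFun d := ⟨Finsupp.toMultiset d.1, by rw [card_toMultiset_deg, d.2]⟩
  invFun s := ⟨Multiset.toFinsupp s.1, by
    rw [← card_toMultiset_deg, Multiset.toFinsupp_toMultiset, s.2]⟩
  left_inv d := by
    ext1
    simp
  right_inv s := by
    ext1
    simp

instance : Fintype {d : Fin 8 →₀ ℕ // Finsupp.degree d = 4} :=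
  Fintype.ofEquiv _ degEquiv.symm

instance : Fintype ↑{d : Fin 8 →₀ ℕ | Finsupp.degree d = 4} :=
  Fintype.ofEquiv _ degEquiv.symm

lemma card_deg4' : Fintype.card ↑{d : Fin 8 →₀ ℕ | Finsupp.degree d = 4} = 330 := by
  rw [Fintype.card_congr
    (show ↑{d : Fin 8 →₀ ℕ | Finsupp.degree d = 4} ≃ Sym (Fin 8) 4 from degEquiv),
    Sym.card_sym_eq_choose, Fintype.card_fin]
  decide

lemma card_deg4 : Fintype.card {d : Fin 8 →₀ ℕ // Finsupp.degree d = 4} = 330 := by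
  rw [Fintype.card_congr degEquiv, Sym.card_sym_eq_choose, Fintype.card_fin]
  decide

lemma hsubV : homogeneousSubmodule (Fin 8) (ZMod 2) 4 =
    restrictSupport (ZMod 2) {d : Fin 8 →₀ ℕ | Finsupp.degree d = 4} :=
  homogeneousSubmodule_eq_finsupp_supported _ _ 4

lemma finrank_V :
    Module.finrank (ZMod 2) (homogeneousSubmodule (Fin 8) (ZMod 2) 4) = 330 := by
  rw [hsubV]
  rw [Module.finrank_eq_card_basis
    (basisRestrictSupport (ZMod 2) {d : Fin 8 →₀ ℕ | Finsupp.degree d = 4})]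
  exact card_deg4'

instance findimV : FiniteDimensional (ZMod 2) (homogeneousSubmodule (Fin 8) (ZMod 2) 4) := by
  rw [hsubV]
  exact Module.Finite.of_basis
    (basisRestrictSupport (ZMod 2) {d : Fin 8 →₀ ℕ | Finsupp.degree d = 4})

lemma hit_le_V : hitSub 8 4 ≤ homogeneousSubmodule (Fin 8) (ZMod 2) 4 := by
  rw [hitSub, Submodule.span_le]
  rintro g ⟨k, f, _, _, _, rfl⟩
  exact (mem_homogeneousSubmodule _ _).mpr (homogeneousComponent_isHomogeneous 4 _)

theorem dim_QP_8_4' : Module.finrank (ZMod 2) (QP 8 4) = 238 := by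
  have h1 := Submodule.finrank_quotient_add_finrank
    ((hitSub 8 4).comap (homogeneousSubmodule (Fin 8) (ZMod 2) 4).subtype)
  have h2 : Module.finrank (ZMod 2)
      ((hitSub 8 4).comap (homogeneousSubmodule (Fin 8) (ZMod 2) 4).subtype) = 92 := by
    rw [(Submodule.comapSubtypeEquivOfLe hit_le_V).finrank_eq, finrank_hit]
  rw [h2, finrank_V] at h1
  have h3 : Module.finrank (ZMod 2) (QP 8 4) + 92 = 330 := h1
  omega

end QPaux
end

/-- The cohit space `QP_4^{⊗8}` has dimension 238 over `F2`. -/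
theorem dim_QP_8_4 : Module.finrank (ZMod 2) (QP 8 4) = 238 := QPaux.dim_QP_8_4'
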